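/- For a closed convex cone C in a real Hilbert space, the Euclidean distance from a point x to C equals the maximum over all θ in the polar cone C° with ‖θ‖ ≤ 1 of the inner product ⟨θ, x⟩. -/

import Mathlib

theorem dist_to_cone_dual
    {H : Type*} [NormedAddCommGroup H] [InnerProductSpace ℝ H] [CompleteSpace H]
    (C : Set H) (hCne : C.Nonempty) (hCcl : IsClosed C) (hCconv : Convex ℝ C)
    (hCcone : ∀ x ∈ C, ∀ a : ℝ, 0 ≤ a → a • x ∈ C)
    (x : H) :
    IsGreatest {r : ℝ | ∃ θ : H, (∀ y ∈ C, (inner ℝ θ y : ℝ) ≤ 0) ∧ ‖θ‖ ≤ 1 ∧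
        r = (inner ℝ θ x : ℝ)}
      (Metric.infDist x C) := by
  obtain ⟨p, hpC, hp⟩ := exists_norm_eq_iInf_of_complete_convex hCne
    (hCcl.isComplete) hCconv x
  have hproj : ∀ w ∈ C, (inner ℝ (x - p) (w - p) : ℝ) ≤ 0 :=
    (norm_eq_iInf_iff_real_inner_le_zero hCconv hpC).1 hp
  have hdist : Metric.infDist x C = ‖x - p‖ := by
    rw [Metric.infDist_eq_iInf, hp]
    congr 1; ext w; rw [dist_eq_norm]
  have h0 : (0 : H) ∈ C := by
    obtain ⟨c, hc⟩ := hCne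
    simpa using hCcone c hc 0 le_rfl
  have h2p : (2 : ℝ) • p ∈ C := hCcone p hpC 2 (by norm_num)
  have hip : (inner ℝ (x - p) p : ℝ) = 0 := by
    have h1 := hproj _ h2p
    have h2 := hproj _ h0
    rw [two_smul] at h1
    simp only [add_sub_cancel_right] at h1
    rw [zero_sub, inner_neg_right] at h2
    linarith
  have hpolar : ∀ y ∈ C, (inner ℝ (x - p) y : ℝ) ≤ 0 := fun y hy => by
    have := hproj y hy
    rwa [inner_sub_right, hip, sub_zero] at this
  have hinnerx : (inner ℝ (x - p) x : ℝ) = ‖x - p‖ ^ 2 := by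
    have h : (inner ℝ (x - p) (x - p) : ℝ) = ‖x - p‖ ^ 2 := real_inner_self_eq_norm_sq _
    rw [inner_sub_right, hip, sub_zero] at h
    exact h
  constructor
  · refine ⟨‖x - p‖⁻¹ • (x - p), fun y hy => ?_, ?_, ?_⟩
    · rw [real_inner_smul_left]
      have := hpolar y hy
      have h0' : (0:ℝ) ≤ ‖x - p‖⁻¹ := by positivity
      exact mul_nonpos_of_nonneg_of_nonpos h0' this
    · rw [norm_smul]
      rcases eq_or_ne (x - p) 0 with h | h
      · simp [h]
      · simp [norm_inv, inv_mul_cancel₀ (norm_ne_zero_iff.2 h)]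
    · rw [real_inner_smul_left, hinnerx, hdist]
      rcases eq_or_ne (x - p) 0 with h | h
      · simp [h]
      · field_simp [norm_ne_zero_iff.2 h]
  · rintro r ⟨θ, hθC, hθ1, rfl⟩
    have hθp : (inner ℝ θ p : ℝ) ≤ 0 := hθC p hpC
    have hsplit : (inner ℝ θ x : ℝ) = (inner ℝ θ (x - p) : ℝ) + (inner ℝ θ p : ℝ) := by
      rw [← inner_add_right, sub_add_cancel]
    rw [hsplit, hdist]
    have hcs : (inner ℝ θ (x - p) : ℝ) ≤ ‖θ‖ * ‖x - p‖ := real_inner_le_norm _ _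
    nlinarith [norm_nonneg (x - p)]
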